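/- Let (g,[·,…,·],α,⟨,⟩) be a metric n-ary multiplicative Hom-Nambu-Lie superalgebra of even dimension m over a field, and let I be an isotropic Hom-ideal of dimension m/2. Then I is abelian, i.e., [g,…,g,I,I] = 0. -/
import Mathlib


open scoped BigOperators

universe u v w

variable (K : Type u) [Field K]

/-- The sign `(-1)^(a·b)` for `a b : ZMod 2`. -/
def sgn (a b : ZMod 2) : K := if a = 1 ∧ b = 1 then -1 else 1

/-- Sum of the degrees with index strictly below `i`. -/
def psum {m : ℕ} (d : Fin m → ZMod 2) (i : Fin m) : ZMod 2 :=
  ∑ j ∈ Finset.univ.filter (fun j => j < i), d j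

/-- Sum of the degrees with index strictly above `i`. -/
def ssum {m : ℕ} (d : Fin m → ZMod 2) (i : Fin m) : ZMod 2 :=
  ∑ j ∈ Finset.univ.filter (fun j => i < j), d j

/-- Raw data of an `(n+2)`-ary algebra with a `ZMod 2`-grading and a twisting map:
a grading by submodules forming an internal direct sum, an `(n+2)`-linear bracket and
a linear map `α`. -/
structure NData (n : ℕ) (g : Type v) [AddCommGroup g] [Module K g] where
  G : ZMod 2 → Submodule K g
  internal : DirectSum.IsInternal G
  br : MultilinearMap K (fun _ : Fin (n + 2) => g) g
  α : g →ₗ[K] g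

namespace NData

variable {K} {n : ℕ} {g : Type v} [AddCommGroup g] [Module K g] (A : NData K n g)

/-- A tuple is homogeneous with (componentwise) degrees `d`. -/
def Homog {m : ℕ} (x : Fin m → g) (d : Fin m → ZMod 2) : Prop := ∀ i, x i ∈ A.G (d i)

/-- Action of a fundamental object (an `(n+1)`-tuple) on an element. -/
def act (x : Fin (n + 1) → g) (z : g) : g := A.br (Fin.snoc x z)

/-- The `i`-th component tuple of the bracket `[x,y]_α` of fundamental objects:
`α y₁ ∧ ⋯ ∧ (x · yᵢ) ∧ ⋯ ∧ α y_{n+1}`. -/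
def comp (x y : Fin (n + 1) → g) (i : Fin (n + 1)) : Fin (n + 1) → g :=
  Function.update (fun k => A.α (y k)) i (A.act x (y i))

/-- The bracket is even. -/
def BrEven : Prop := ∀ (d : Fin (n + 2) → ZMod 2) (x : Fin (n + 2) → g),
  A.Homog x d → A.br x ∈ A.G (∑ i, d i)

/-- The bracket is super-skew-symmetric in adjacent arguments. -/
def BrSkew : Prop := ∀ (d : Fin (n + 2) → ZMod 2) (x : Fin (n + 2) → g), A.Homog x d →
  ∀ i j : Fin (n + 2), (i : ℕ) + 1 = (j : ℕ) →
    A.br (x ∘ Equiv.swap i j) = -(sgn K (d i) (d j) • A.br x)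

/-- `α` is even. -/
def AlphaEven : Prop := ∀ (d : ZMod 2) (x : g), x ∈ A.G d → A.α x ∈ A.G d

/-- `α` is multiplicative with respect to the bracket. -/
def Mult : Prop := ∀ x : Fin (n + 2) → g, A.α (A.br x) = A.br fun i => A.α (x i)

/-- The graded Filippov (fundamental) identity. -/
def Filippov : Prop := ∀ (dx : Fin (n + 1) → ZMod 2) (dy : Fin (n + 2) → ZMod 2)
    (x : Fin (n + 1) → g) (y : Fin (n + 2) → g), A.Homog x dx → A.Homog y dy →
  A.act x (A.br y) = ∑ i, sgn K (∑ k, dx k) (psum dy i) •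
    A.br (Function.update y i (A.act x (y i)))

/-- The `α`-twisted graded Filippov identity. -/
def HomFilippov : Prop := ∀ (dx : Fin (n + 1) → ZMod 2) (dy : Fin (n + 2) → ZMod 2)
    (x : Fin (n + 1) → g) (y : Fin (n + 2) → g), A.Homog x dx → A.Homog y dy →
  A.act (fun k => A.α (x k)) (A.br y) = ∑ i, sgn K (∑ k, dx k) (psum dy i) •
    A.br (Function.update (fun k => A.α (y k)) i (A.act x (y i)))

/-- `(g,[·,…,·])` is an `(n+2)`-ary Nambu-Lie superalgebra (the map `α` is irrelevant). -/
def IsNambuLieSuper : Prop := A.BrEven ∧ A.BrSkew ∧ A.Filippov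

/-- `(g,[·,…,·],α)` is an `(n+2)`-ary multiplicative Hom-Nambu-Lie superalgebra. -/
def IsHomNambuLieSuper : Prop :=
  A.BrEven ∧ A.BrSkew ∧ A.AlphaEven ∧ A.Mult ∧ A.HomFilippov

/-- The action of the bracket `[x,y]_α` of two fundamental objects on an element `z`,
where `dx` is the total degree of `x` and `dy` the componentwise degrees of `y`. -/
def wbrAct (dx : ZMod 2) (dy : Fin (n + 1) → ZMod 2) (x y : Fin (n + 1) → g) (z : g) : g :=
  ∑ i, sgn K dx (psum dy i) • A.act (A.comp x y i) z

/-- `(ρ, ν, GV)` is a graded representation of `A` on `V`. -/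
def IsRep {V : Type w} [AddCommGroup V] [Module K V]
    (ρ : MultilinearMap K (fun _ : Fin (n + 1) => g) (Module.End K V))
    (ν : Module.End K V) (GV : ZMod 2 → Submodule K V) : Prop :=
  (∀ (d : Fin (n + 1) → ZMod 2) (x : Fin (n + 1) → g), A.Homog x d →
    ∀ (β : ZMod 2) (v : V), v ∈ GV β → ρ x v ∈ GV (β + ∑ i, d i)) ∧
  (∀ (dx dy : Fin (n + 1) → ZMod 2) (x y : Fin (n + 1) → g), A.Homog x dx → A.Homog y dy →
    ρ (fun k => A.α (x k)) * ρ y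
      = sgn K (∑ i, dx i) (∑ i, dy i) • (ρ (fun k => A.α (y k)) * ρ x)
        + (∑ i, sgn K (∑ k, dx k) (psum dy i) • ρ (A.comp x y i)) * ν) ∧
  (∀ (dx : Fin n → ZMod 2) (dy : Fin (n + 2) → ZMod 2) (x : Fin n → g) (y : Fin (n + 2) → g),
    A.Homog x dx → A.Homog y dy →
    ρ (Fin.snoc (fun k => A.α (x k)) (A.br y)) * ν
      = ∑ i : Fin (n + 2), ((-1 : K) ^ (n + 1 - (i : ℕ))
          * sgn K (∑ k, dx k) ((∑ k, dy k) + dy i)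
          * sgn K (dy i) (ssum dy i)) •
        (ρ (fun k => A.α (y (i.succAbove k))) * ρ (Fin.snoc x (y i))))

/-- The adjoint action of a fundamental object, as an endomorphism of `g`. -/
def adE : MultilinearMap K (fun _ : Fin (n + 1) => g) (Module.End K g) :=
  A.br.curryRight

/-- The degree-`d` part of the graded dual space: functionals vanishing on the
component of the other degree. -/
def dualG (d : ZMod 2) : Submodule K (Module.Dual K g) where
  carrier := {f | ∀ x ∈ A.G (d + 1), f x = 0}
  add_mem' := by
    intro a b ha hb x hx
    simp [ha x hx, hb x hx]
  zero_mem' := by intro x _; simp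
  smul_mem' := by
    intro c f hf x hx
    simp [hf x hx]

/-- The coadjoint action `ad*(x)(φ) = -(-1)^{|x||φ|} φ ∘ ad(x)`, with the degrees
`dx` of `x` and `df` of `φ` given explicitly. -/
def coad (dx df : ZMod 2) (x : Fin (n + 1) → g) (φ : Module.Dual K g) : Module.Dual K g :=
  -(sgn K dx df) • (φ ∘ₗ (A.adE x : g →ₗ[K] g))

/-- The grading of `g ⊕ g*`. -/
def tG (d : ZMod 2) : Submodule K (g × Module.Dual K g) := (A.G d).prod (A.dualG d)

/-- The twist map `α'(x+f) = α(x) + f ∘ α` of the `T*`-extension. -/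
def tα : (g × Module.Dual K g) →ₗ[K] g × Module.Dual K g :=
  LinearMap.prodMap A.α A.α.dualMap

/-- The bracket of the `T*`-extension by `θ`, on tuples with degree annotations `d`. -/
def tbr (θ : (Fin (n + 2) → g) → Module.Dual K g) (d : Fin (n + 2) → ZMod 2)
    (p : Fin (n + 2) → g × Module.Dual K g) : g × Module.Dual K g :=
  (A.br (fun i => (p i).1),
   θ (fun i => (p i).1)
     + ∑ i : Fin (n + 2), ((-1 : K) ^ (n + 1 - (i : ℕ)) * sgn K (d i) (ssum d i)) •
         A.coad ((∑ k, d k) + d i) (d i) (fun k => (p (i.succAbove k)).1) ((p i).2))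

/-- The canonical pairing `⟨x+f, y+h⟩ = f(y) + (-1)^{|x+f||y+h|} h(x)` on `g ⊕ g*`,
with the degrees given explicitly. -/
def tpair (_A : NData K n g) (d₁ d₂ : ZMod 2) (u v : g × Module.Dual K g) : K :=
  u.2 v.1 + sgn K d₁ d₂ * v.2 u.1

/-- The coboundary of a `1`-cochain with values in the dual module (with the coadjoint
action), on homogeneous arguments with the indicated degrees. -/
def tdelta (θ : (Fin (n + 2) → g) → Module.Dual K g)
    (dx : Fin (n + 1) → ZMod 2) (dY : Fin (n + 2) → ZMod 2)
    (x : Fin (n + 1) → g) (Y : Fin (n + 2) → g) : Module.Dual K g :=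
  θ (Fin.snoc (fun k => A.α (x k)) (A.br Y))
    + A.coad (∑ k, dx k) (∑ k, dY k) (fun k => A.α (x k)) (θ Y)
    - ∑ i, sgn K (∑ k, dx k) (psum dY i) •
        θ (Function.update (fun k => A.α (Y k)) i (A.act x (Y i)))
    - ∑ i : Fin (n + 2), (sgn K (∑ k, dx k) (psum dY i) * (-1 : K) ^ (n + 1 - (i : ℕ))
          * sgn K ((∑ k, dx k) + dY i) (ssum dY i)) •
        A.coad ((∑ k, dY k) + dY i) ((∑ k, dx k) + dY i)
          (fun k => A.α (Y (i.succAbove k))) (θ (Fin.snoc x (Y i)))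

/-- `θ` is an even `1`-supercocycle with values in `g*`:
it is even, equivariant, super-skew-symmetric and `δθ = 0`. -/
def TZ1 (θ : (Fin (n + 2) → g) → Module.Dual K g) : Prop :=
  (∀ (d : Fin (n + 2) → ZMod 2) (p : Fin (n + 2) → g), A.Homog p d →
      θ p ∈ A.dualG (∑ i, d i)) ∧
  (∀ p : Fin (n + 2) → g, θ (fun i => A.α (p i)) = (θ p).comp A.α) ∧
  (∀ (d : Fin (n + 2) → ZMod 2) (p : Fin (n + 2) → g), A.Homog p d →
      ∀ i j : Fin (n + 2), (i : ℕ) + 1 = (j : ℕ) →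
        θ (p ∘ Equiv.swap i j) = -(sgn K (d i) (d j) • θ p)) ∧
  (∀ (dx : Fin (n + 1) → ZMod 2) (dY : Fin (n + 2) → ZMod 2)
      (x : Fin (n + 1) → g) (Y : Fin (n + 2) → g), A.Homog x dx → A.Homog Y dY →
        A.tdelta θ dx dY x Y = 0)

/-- The cyclicity condition `θ(x,y)(z) + (-1)^{|y||z|} θ(x,z)(y) = 0`. -/
def TCyclic (θ : (Fin (n + 2) → g) → Module.Dual K g) : Prop :=
  ∀ (dx : Fin (n + 1) → ZMod 2) (dy dz : ZMod 2) (x : Fin (n + 1) → g) (y z : g),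
    A.Homog x dx → y ∈ A.G dy → z ∈ A.G dz →
      θ (Fin.snoc x y) z + sgn K dy dz * θ (Fin.snoc x z) y = 0

/-- `I` is a Hom-ideal: stable under `α` and absorbing in the first slot. -/
def IsHomIdeal (I : Submodule K g) : Prop :=
  (∀ x ∈ I, A.α x ∈ I) ∧ ∀ p : Fin (n + 2) → g, p 0 ∈ I → A.br p ∈ I

/-- `I` is a graded subspace: it is spanned by its homogeneous elements. -/
def IsGradedSub (I : Submodule K g) : Prop :=
  I ≤ Submodule.span K ((I : Set g) ∩ ((A.G 0 : Set g) ∪ (A.G 1 : Set g)))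

/-- The orthogonal space of `S` with respect to a bilinear form `B`. -/
def perpB (_A : NData K n g) (B : g →ₗ[K] g →ₗ[K] K) (S : Submodule K g) : Submodule K g where
  carrier := {x | ∀ y ∈ S, B x y = 0}
  add_mem' := by
    intro a b ha hb y hy
    simp [ha y hy, hb y hy]
  zero_mem' := by intro y _; simp
  smul_mem' := by
    intro c x hx y hy
    simp [hx y hy]

/-- `B` is a metric on `A`: nondegenerate, supersymmetric, consistent, invariant, and
`α` is `B`-symmetric. -/
def IsMetric (B : g →ₗ[K] g →ₗ[K] K) : Prop :=
  (∀ x : g, (∀ y : g, B x y = 0) → x = 0) ∧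
  (∀ (dx dy : ZMod 2) (x y : g), x ∈ A.G dx → y ∈ A.G dy →
      B x y = sgn K dx dy * B y x) ∧
  (∀ (dx dy : ZMod 2) (x y : g), x ∈ A.G dx → y ∈ A.G dy → dx ≠ dy → B x y = 0) ∧
  (∀ (dx : Fin (n + 1) → ZMod 2) (dy : ZMod 2) (x : Fin (n + 1) → g) (y z : g),
      A.Homog x dx → y ∈ A.G dy →
        B (A.act x y) z = -(sgn K (∑ i, dx i) dy * B y (A.act x z))) ∧
  (∀ x y : g, B (A.α x) y = B (A.α y) x)

/-- `[S, g, …, g]` (ideal-type product, `S` in the first slot). -/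
def brFirst (S : Submodule K g) : Submodule K g :=
  Submodule.span K {y | ∃ p : Fin (n + 2) → g, p 0 ∈ S ∧ y = A.br p}

/-- `[g, …, g, S]` (`S` in the last slot). -/
def brLast (S : Submodule K g) : Submodule K g :=
  Submodule.span K {y | ∃ p : Fin (n + 2) → g, p (Fin.last (n + 1)) ∈ S ∧ y = A.br p}

/-- `[S, …, S]` (all slots in `S`). -/
def brAll (S : Submodule K g) : Submodule K g :=
  Submodule.span K {y | ∃ p : Fin (n + 2) → g, (∀ i, p i ∈ S) ∧ y = A.br p}

/-- The lower central series: `lcs 0 = g = g¹`, `lcs m = g^{m+1}`. -/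
def lcs (m : ℕ) : Submodule K g := Nat.rec ⊤ (fun _ ih => A.brFirst ih) m

/-- The derived series: `ds 0 = g = g^{(0)}`, `ds m = g^{(m)}`. -/
def ds (m : ℕ) : Submodule K g := Nat.rec ⊤ (fun _ ih => A.brAll ih) m

/-- `C(V) = {x | [x,g,…,g] ⊆ V}`. -/
def cv (S : Submodule K g) : Submodule K g where
  carrier := {x | ∀ p : Fin (n + 2) → g, A.br (Function.update p 0 x) ∈ S}
  add_mem' := by
    intro a b ha hb p
    rw [A.br.map_update_add]
    exact S.add_mem (ha p) (hb p)
  zero_mem' := by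
    intro p
    rw [A.br.map_update_zero]
    exact S.zero_mem
  smul_mem' := by
    intro c x hx p
    rw [A.br.map_update_smul]
    exact S.smul_mem c (hx p)

/-- The ascending series `C₀(g) = 0`, `C_{i+1}(g) = C(Cᵢ(g))`. -/
def cs (m : ℕ) : Submodule K g := Nat.rec ⊥ (fun _ ih => A.cv ih) m

/-- `g` is nilpotent of length exactly `k` (with the convention `g¹ = g = lcs 0`). -/
def NilpLength (k : ℕ) : Prop :=
  1 ≤ k ∧ A.lcs (k - 1) = ⊥ ∧ ∀ j, 1 ≤ j → j < k → A.lcs (j - 1) ≠ ⊥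

/-- `g` is solvable of length exactly `k`. -/
def SolvLength (k : ℕ) : Prop :=
  A.ds k = ⊥ ∧ ∀ j < k, A.ds j ≠ ⊥

/-- `[S, T*g, …, T*g]_θ`-type span for the `T*`-extension, `S` in the first slot,
over homogeneous annotated tuples. -/
def tbrFirst (θ : (Fin (n + 2) → g) → Module.Dual K g)
    (S : Submodule K (g × Module.Dual K g)) : Submodule K (g × Module.Dual K g) :=
  Submodule.span K {u | ∃ (d : Fin (n + 2) → ZMod 2) (p : Fin (n + 2) → g × Module.Dual K g),
    (∀ i, p i ∈ A.tG (d i)) ∧ p 0 ∈ S ∧ u = A.tbr θ d p}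

/-- All-slots bracket span for the `T*`-extension, over homogeneous annotated tuples. -/
def tbrAll (θ : (Fin (n + 2) → g) → Module.Dual K g)
    (S : Submodule K (g × Module.Dual K g)) : Submodule K (g × Module.Dual K g) :=
  Submodule.span K {u | ∃ (d : Fin (n + 2) → ZMod 2) (p : Fin (n + 2) → g × Module.Dual K g),
    (∀ i, p i ∈ A.tG (d i)) ∧ (∀ i, p i ∈ S) ∧ u = A.tbr θ d p}

/-- Lower central series of the `T*`-extension. -/
def tlcs (θ : (Fin (n + 2) → g) → Module.Dual K g) (m : ℕ) :
    Submodule K (g × Module.Dual K g) := Nat.rec ⊤ (fun _ ih => A.tbrFirst θ ih) m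

/-- Derived series of the `T*`-extension. -/
def tds (θ : (Fin (n + 2) → g) → Module.Dual K g) (m : ℕ) :
    Submodule K (g × Module.Dual K g) := Nat.rec ⊤ (fun _ ih => A.tbrAll θ ih) m

/-- Nilpotency length of the `T*`-extension. -/
def TNilpLength (θ : (Fin (n + 2) → g) → Module.Dual K g) (k : ℕ) : Prop :=
  1 ≤ k ∧ A.tlcs θ (k - 1) = ⊥ ∧ ∀ j, 1 ≤ j → j < k → A.tlcs θ (j - 1) ≠ ⊥

/-- Solvability length of the `T*`-extension. -/
def TSolvLength (θ : (Fin (n + 2) → g) → Module.Dual K g) (k : ℕ) : Prop :=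
  A.tds θ k = ⊥ ∧ ∀ j < k, A.tds θ j ≠ ⊥

end NData

section Aux

variable {K : Type u} [Field K] {n : ℕ} {g : Type v} [AddCommGroup g] [Module K g]

lemma sgn_mul_self (a b : ZMod 2) : sgn K a b * sgn K a b = 1 := by
  unfold sgn; split <;> norm_num

/-- Expansion of a multilinear map over spanning sets in each slot. -/
lemma multilinear_span_mem {M : Type w} [AddCommGroup M] [Module K M] {m : ℕ}
    (f : MultilinearMap K (fun _ : Fin m => g) M) (T : Fin m → Set g) (S : Submodule K M)
    (H : ∀ q : Fin m → g, (∀ i, q i ∈ T i) → f q ∈ S) :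
    ∀ q : Fin m → g, (∀ i, q i ∈ Submodule.span K (T i)) → f q ∈ S := by
  suffices H2 : ∀ s : Finset (Fin m), ∀ q : Fin m → g,
      (∀ i ∈ s, q i ∈ Submodule.span K (T i)) → (∀ i ∉ s, q i ∈ T i) → f q ∈ S by
    intro q hq
    exact H2 Finset.univ q (fun i _ => hq i) (fun i hi => absurd (Finset.mem_univ i) hi)
  intro s
  induction s using Finset.induction with
  | empty => intro q _ h2; exact H q (fun i => h2 i (by simp))
  | @insert i s hi ih =>
    intro q h1 h2
    have key : ∀ x ∈ Submodule.span K (T i), f (Function.update q i x) ∈ S := by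
      intro x hx
      induction hx using Submodule.span_induction with
      | mem x hxT =>
        apply ih
        · intro j hj
          rw [Function.update_of_ne (by rintro rfl; exact hi hj)]
          exact h1 j (Finset.mem_insert_of_mem hj)
        · intro j hj
          by_cases hji : j = i
          · subst hji; rw [Function.update_self]; exact hxT
          · rw [Function.update_of_ne hji]
            exact h2 j (by simp [hji, hj])
      | zero => rw [f.map_update_zero]; exact S.zero_mem
      | add x y _ _ ihx ihy => rw [f.map_update_add]; exact S.add_mem ihx ihy
      | smul a x _ ihx => rw [f.map_update_smul]; exact S.smul_mem a ihx
    have := key (q i) (h1 i (Finset.mem_insert_self i s))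
    rwa [Function.update_eq_self] at this

/-- In a homogeneous tuple, a bracket with an entry of a Hom-ideal in any slot lands
in the ideal. -/
lemma ideal_any_slot (A : NData K n g) (hA : A.IsHomNambuLieSuper)
    (I : Submodule K g) (hI : A.IsHomIdeal I) :
    ∀ (k : ℕ) (hk : k < n + 2) (d : Fin (n + 2) → ZMod 2) (q : Fin (n + 2) → g),
      A.Homog q d → q ⟨k, hk⟩ ∈ I → A.br q ∈ I := by
  intro k
  induction k with
  | zero =>
    intro hk d q hq hqI
    apply hI.2
    have e0 : (0 : Fin (n + 2)) = ⟨0, hk⟩ := by ext; simp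
    rw [e0]; exact hqI
  | succ k ihk =>
    intro hk d q hq hqI
    have hk' : k < n + 2 := by omega
    set i : Fin (n + 2) := ⟨k, hk'⟩ with hidef
    set j : Fin (n + 2) := ⟨k + 1, hk⟩ with hjdef
    have hij : (i : ℕ) + 1 = (j : ℕ) := rfl
    have hq' : A.Homog (q ∘ Equiv.swap i j) (d ∘ Equiv.swap i j) :=
      fun l => hq (Equiv.swap i j l)
    have hmem : (q ∘ Equiv.swap i j) ⟨k, hk'⟩ ∈ I := by
      show q (Equiv.swap i j i) ∈ I
      rw [Equiv.swap_apply_left]; exact hqI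
    have hbr' : A.br (q ∘ Equiv.swap i j) ∈ I :=
      ihk hk' (d ∘ Equiv.swap i j) (q ∘ Equiv.swap i j) hq' hmem
    have hskew := hA.2.1 d q hq i j hij
    rw [hskew] at hbr'
    have h2 : sgn K (d i) (d j) • A.br q ∈ I := by
      rw [← neg_neg (sgn K (d i) (d j) • A.br q)]
      exact I.neg_mem hbr'
    have h3 := I.smul_mem (sgn K (d i) (d j)) h2
    rwa [smul_smul, sgn_mul_self, one_smul] at h3

end Aux

/-- In a metric `n`-ary multiplicative Hom-Nambu-Lie superalgebra of
even dimension `m`, any isotropic Hom-ideal of dimension `m/2` is abelian: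
`[g, …, g, I, I] = 0`. -/
theorem isotropic_half_ideal_abelian {K : Type u} [Field K] {n : ℕ} {g : Type v}
    [AddCommGroup g] [Module K g] (A : NData K n g) (hA : A.IsHomNambuLieSuper)
    (B : g →ₗ[K] g →ₗ[K] K) (hB : A.IsMetric B)
    [FiniteDimensional K g] (m : ℕ) (hm : Module.finrank K g = m) (hme : Even m)
    (I : Submodule K g) (hI : A.IsHomIdeal I) (hIgr : A.IsGradedSub I)
    (hiso : I ≤ A.perpB B I) (hdim : Module.finrank K I = m / 2) :
    ∀ p : Fin (n + 2) → g,
      p ⟨n, by omega⟩ ∈ I → p (Fin.last (n + 1)) ∈ I → A.br p = 0 := by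
  intro p hpn hpl
  classical
  set i0 : Fin (n + 2) := ⟨n, by omega⟩ with hi0
  -- the homogeneous generating sets
  set U : Set g := (↑(A.G 0) ∪ ↑(A.G 1) : Set g) with hU
  have hUtop : Submodule.span K U = ⊤ := by
    rw [hU, Submodule.span_union, Submodule.span_eq, Submodule.span_eq]
    have h1 : ⨆ i, A.G i = ⊤ := A.internal.submodule_iSup_eq_top
    refine le_antisymm le_top ?_
    rw [← h1]
    refine iSup_le fun i => ?_
    have : i = 0 ∨ i = 1 := by revert i; decide
    rcases this with h | h <;> subst h
    · exact le_sup_left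
    · exact le_sup_right
  -- the key homogeneous computation
  have core : ∀ q : Fin (n + 2) → g,
      (∀ i, q i ∈ (if i = i0 ∨ i = Fin.last (n + 1) then (↑I ∩ U : Set g) else U)) →
      A.br q ∈ (⊥ : Submodule K g) := by
    intro q hq
    have hhom : ∀ i, q i ∈ U := by
      intro i
      have := hq i
      split_ifs at this with h
      · exact this.2
      · exact this
    have hqn : q i0 ∈ I := by
      have := hq i0; rw [if_pos (Or.inl rfl)] at this; exact this.1
    have hql : q (Fin.last (n + 1)) ∈ I := by
      have := hq (Fin.last (n + 1)); rw [if_pos (Or.inr rfl)] at this; exact this.1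
    have hex : ∀ i, ∃ e : ZMod 2, q i ∈ A.G e := by
      intro i
      rcases hhom i with h | h
      · exact ⟨0, h⟩
      · exact ⟨1, h⟩
    choose d hd using hex
    set x : Fin (n + 1) → g := Fin.init q with hx
    set dx : Fin (n + 1) → ZMod 2 := Fin.init d with hdx
    have hxh : A.Homog x dx := fun k => hd k.castSucc
    have hbr : A.br q = A.act x (q (Fin.last (n + 1))) := by
      show A.br q = A.br (Fin.snoc (Fin.init q) (q (Fin.last (n + 1))))
      rw [Fin.snoc_init_self]
    have main : ∀ (e : ZMod 2) (z : g), z ∈ A.G e → B (A.br q) z = 0 := by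
      intro e z hz
      rw [hbr, hB.2.2.2.1 dx (d (Fin.last (n + 1))) x (q (Fin.last (n + 1))) z hxh
        (hd (Fin.last (n + 1)))]
      have hsnoc : A.Homog (Fin.snoc x z) (Fin.snoc dx e) := by
        intro i
        refine Fin.lastCases ?_ (fun k => ?_) i
        · rw [Fin.snoc_last, Fin.snoc_last]; exact hz
        · rw [Fin.snoc_castSucc, Fin.snoc_castSucc]; exact hd k.castSucc
      have hslot : (Fin.snoc x z : Fin (n + 2) → g) ⟨n, by omega⟩ ∈ I := by
        have e1 : (⟨n, by omega⟩ : Fin (n + 2)) = Fin.castSucc ⟨n, n.lt_succ_self⟩ := rfl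
        rw [e1, Fin.snoc_castSucc]
        exact hqn
      have hsz : A.act x z ∈ I :=
        ideal_any_slot A hA I hI n (by omega) (Fin.snoc dx e) (Fin.snoc x z) hsnoc hslot
      have hzero : B (q (Fin.last (n + 1))) (A.act x z) = 0 := hiso hql _ hsz
      rw [hzero, mul_zero, neg_zero]
    rw [Submodule.mem_bot]
    apply hB.1
    intro z
    have hzmem : z ∈ A.G 0 ⊔ A.G 1 := by
      have : A.G 0 ⊔ A.G 1 = ⊤ := by
        rw [← hUtop, hU, Submodule.span_union, Submodule.span_eq, Submodule.span_eq]
      rw [this]; trivial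
    obtain ⟨z0, hz0, z1, hz1, rfl⟩ := Submodule.mem_sup.mp hzmem
    rw [map_add, main 0 z0 hz0, main 1 z1 hz1, add_zero]
  have hspan : ∀ i, p i ∈ Submodule.span K
      (if i = i0 ∨ i = Fin.last (n + 1) then (↑I ∩ U : Set g) else U) := by
    intro i
    split_ifs with h
    · rcases h with h | h <;> subst h
      · exact hIgr hpn
      · exact hIgr hpl
    · rw [hUtop]; trivial
  have := multilinear_span_mem A.br
    (fun i => if i = i0 ∨ i = Fin.last (n + 1) then (↑I ∩ U : Set g) else U) ⊥ core p hspan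
  rwa [Submodule.mem_bot] at this
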